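/- Let (x_i)_{i∈I} be a finite nonempty family of points of ℝ^n and let τ > 0. Define w_i(y) := exp(−‖y−x_i‖²/(2τ)), π_i(y) := w_i(y)/Σ_{j∈I} w_j(y), b(y) := Σ_{j∈I} π_j(y) x_j, x̃_i(y) := x_i − b(y), and ṁ(y) := y − b(y). Then ṁ is differentiable and for every y, v ∈ ℝ^n the derivative of ṁ at y applied to v equals v − τ^{−1} Σ_{i∈I} π_i(y) ⟨x̃_i(y), v⟩ x̃_i(y). -/

import Mathlib

open scoped RealInnerProductSpace BigOperators

noncomputable section

/-- Gaussian weight `w_i(y) = exp(−‖y−x_i‖²/(2τ))`. -/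
def gaussW {n : ℕ} {I : Type*} (x : I → EuclideanSpace ℝ (Fin n)) (τ : ℝ) (i : I)
    (y : EuclideanSpace ℝ (Fin n)) : ℝ :=
  Real.exp (-‖y - x i‖ ^ 2 / (2 * τ))

/-- Normalized weight `π_i(y) = w_i(y)/∑_j w_j(y)`. -/
def piW {n : ℕ} {I : Type*} [Fintype I] (x : I → EuclideanSpace ℝ (Fin n)) (τ : ℝ) (i : I)
    (y : EuclideanSpace ℝ (Fin n)) : ℝ :=
  gaussW x τ i y / ∑ j, gaussW x τ j y

/-- The barycenter `b(y) = ∑_j π_j(y) x_j`. -/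
def bary {n : ℕ} {I : Type*} [Fintype I] (x : I → EuclideanSpace ℝ (Fin n)) (τ : ℝ)
    (y : EuclideanSpace ℝ (Fin n)) : EuclideanSpace ℝ (Fin n) :=
  ∑ j, piW x τ j y • x j

/-- The centered point `x̃_i(y) = x_i − b(y)`. -/
def xtil {n : ℕ} {I : Type*} [Fintype I] (x : I → EuclideanSpace ℝ (Fin n)) (τ : ℝ) (i : I)
    (y : EuclideanSpace ℝ (Fin n)) : EuclideanSpace ℝ (Fin n) :=
  x i - bary x τ y

/-- The drift `ṁ(y) = y − b(y)`. -/
def mdot {n : ℕ} {I : Type*} [Fintype I] (x : I → EuclideanSpace ℝ (Fin n)) (τ : ℝ)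
    (y : EuclideanSpace ℝ (Fin n)) : EuclideanSpace ℝ (Fin n) :=
  y - bary x τ y

theorem hasFDerivAt_gaussW {n : ℕ} {I : Type*} (x : I → EuclideanSpace ℝ (Fin n)) {τ : ℝ}
    (hτ : τ ≠ 0) (i : I) (y : EuclideanSpace ℝ (Fin n)) :
    HasFDerivAt (gaussW x τ i) ((-τ⁻¹ * gaussW x τ i y) • innerSL ℝ (y - x i)) y := by
  have h1 : HasFDerivAt (fun z : EuclideanSpace ℝ (Fin n) => z - x i)
      (ContinuousLinearMap.id ℝ _) y := (hasFDerivAt_id y).sub_const _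
  have h2 := h1.norm_sq
  have h3 := (h2.const_mul (-(2*τ)⁻¹ : ℝ)).exp
  have hfun : gaussW x τ i = fun z : EuclideanSpace ℝ (Fin n) =>
      Real.exp (-(2*τ)⁻¹ * ‖z - x i‖ ^ 2) := by
    funext z; unfold gaussW; ring_nf
  rw [hfun]
  refine h3.congr_fderiv ?_
  ext v
  simp [gaussW, ContinuousLinearMap.smul_apply, mul_comm, real_inner_comm]
  field_simp

theorem sumW_pos {n : ℕ} {I : Type*} [Fintype I] [Nonempty I] (x : I → EuclideanSpace ℝ (Fin n))
    (τ : ℝ) (y : EuclideanSpace ℝ (Fin n)) : 0 < ∑ j, gaussW x τ j y :=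
  Finset.sum_pos (fun j _ => Real.exp_pos _) Finset.univ_nonempty

theorem hasFDerivAt_piW {n : ℕ} {I : Type*} [Fintype I] [Nonempty I]
    (x : I → EuclideanSpace ℝ (Fin n)) {τ : ℝ} (hτ : τ ≠ 0) (i : I)
    (y : EuclideanSpace ℝ (Fin n)) :
    HasFDerivAt (piW x τ i) ((τ⁻¹ * piW x τ i y) • innerSL ℝ (xtil x τ i y)) y := by
  have hSpos := sumW_pos x τ y
  have hS : HasFDerivAt (fun z => ∑ j, gaussW x τ j z)
      (∑ j, (-τ⁻¹ * gaussW x τ j y) • innerSL ℝ (y - x j)) y :=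
    HasFDerivAt.fun_sum (fun j _ => hasFDerivAt_gaussW x hτ j y)
  have hinv := (hasFDerivAt_inv hSpos.ne').comp y hS
  have hdiv := (hasFDerivAt_gaussW x hτ i y).mul hinv
  have hfun : piW x τ i = fun z => gaussW x τ i z * (∑ j, gaussW x τ j z)⁻¹ := by
    funext z; rw [piW, div_eq_mul_inv]
  rw [hfun]
  refine hdiv.congr_fderiv ?_
  ext v
  set S := ∑ j, gaussW x τ j y with hSdef
  have hxt : ⟪xtil x τ i y, v⟫ = ⟪x i, v⟫ - ∑ j, piW x τ j y * ⟪x j, v⟫ := by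
    rw [xtil, inner_sub_left, bary, sum_inner]
    simp_rw [real_inner_smul_left]
  have hsum1 : (∑ j, (-τ⁻¹ * gaussW x τ j y) • innerSL ℝ (y - x j)) v
      = -τ⁻¹ * (⟪y, v⟫ * S - ∑ j, gaussW x τ j y * ⟪x j, v⟫) := by
    simp only [ContinuousLinearMap.sum_apply, ContinuousLinearMap.smul_apply, innerSL_apply_apply,
      smul_eq_mul, inner_sub_left]
    have h : ∀ j : I, -τ⁻¹ * gaussW x τ j y * (⟪y, v⟫ - ⟪x j, v⟫)
        = (-τ⁻¹ * ⟪y, v⟫) * gaussW x τ j y + τ⁻¹ * (gaussW x τ j y * ⟪x j, v⟫) := fun j => by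
      ring
    rw [Finset.sum_congr rfl fun j _ => h j, Finset.sum_add_distrib, ← Finset.mul_sum,
      ← Finset.mul_sum]
    ring
  have hsum2 : ∑ j, piW x τ j y * ⟪x j, v⟫ = (∑ j, gaussW x τ j y * ⟪x j, v⟫) / S := by
    rw [Finset.sum_div]
    refine Finset.sum_congr rfl fun j _ => ?_
    rw [piW]; ring
  simp only [ContinuousLinearMap.smul_apply, innerSL_apply_apply, smul_eq_mul,
    ContinuousLinearMap.add_apply, ContinuousLinearMap.comp_apply,
    ContinuousLinearMap.smulRight_apply, ContinuousLinearMap.one_apply,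
    ContinuousLinearMap.toSpanSingleton_apply,
    Function.comp_apply]
  rw [hxt, hsum1, hsum2]
  rw [inner_sub_left, ← hSdef]
  field_simp
  ring

theorem hasFDerivAt_mdot {n : ℕ} {I : Type*} [Fintype I] [Nonempty I]
    (x : I → EuclideanSpace ℝ (Fin n)) {τ : ℝ} (hτ : τ ≠ 0)
    (y : EuclideanSpace ℝ (Fin n)) :
    HasFDerivAt (mdot x τ)
      (ContinuousLinearMap.id ℝ _ -
        ∑ j, ((τ⁻¹ * piW x τ j y) • innerSL ℝ (xtil x τ j y)).smulRight (x j)) y := by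
  have hb : HasFDerivAt (bary x τ)
      (∑ j, ((τ⁻¹ * piW x τ j y) • innerSL ℝ (xtil x τ j y)).smulRight (x j)) y := by
    apply HasFDerivAt.fun_sum
    intro j _
    exact (hasFDerivAt_piW x hτ j y).smul_const (x j)
  exact (hasFDerivAt_id y).sub hb

/-- eq. (60) of the paper. For a finite nonempty family `(x i)` of points of
`ℝ^n` and `τ > 0`, the drift `ṁ(y) = y − b(y)` is differentiable and its derivative at `y`
applied to `v` equals `v − τ⁻¹ ∑_i π_i(y) ⟪x̃_i(y), v⟫ x̃_i(y)`. -/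
theorem statement2 {n : ℕ} {I : Type*} [Fintype I] [Nonempty I]
    (x : I → EuclideanSpace ℝ (Fin n)) (τ : ℝ) (hτ : 0 < τ) :
    Differentiable ℝ (mdot x τ) ∧
      ∀ (y v : EuclideanSpace ℝ (Fin n)),
        fderiv ℝ (mdot x τ) y v
          = v - τ⁻¹ • ∑ i, (piW x τ i y * ⟪xtil x τ i y, v⟫) • xtil x τ i y := by
  constructor
  · exact fun y => (hasFDerivAt_mdot x hτ.ne' y).differentiableAt
  · intro y v
    rw [(hasFDerivAt_mdot x hτ.ne' y).fderiv]
    have hSpos := sumW_pos x τ y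
    have hsumpi : ∑ j, piW x τ j y = 1 := by
      simp only [piW, ← Finset.sum_div]
      field_simp
    have hbv : ⟪bary x τ y, v⟫ = ∑ j, piW x τ j y * ⟪x j, v⟫ := by
      rw [bary, sum_inner]
      simp_rw [real_inner_smul_left]
    have hc0 : ∑ j, piW x τ j y * ⟪xtil x τ j y, v⟫ = 0 := by
      simp_rw [xtil, inner_sub_left, mul_sub, Finset.sum_sub_distrib, ← Finset.sum_mul, hsumpi,
        hbv]
      ring
    have hswap : ∑ i, (piW x τ i y * ⟪xtil x τ i y, v⟫) • xtil x τ i y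
        = ∑ i, (piW x τ i y * ⟪xtil x τ i y, v⟫) • x i := by
      have h : ∀ i : I, (piW x τ i y * ⟪xtil x τ i y, v⟫) • xtil x τ i y
          = (piW x τ i y * ⟪xtil x τ i y, v⟫) • x i
            - (piW x τ i y * ⟪xtil x τ i y, v⟫) • bary x τ y := fun i => by
        rw [xtil, smul_sub]
      rw [Finset.sum_congr rfl fun i _ => h i, Finset.sum_sub_distrib, ← Finset.sum_smul, hc0,
        zero_smul, sub_zero]
    rw [hswap]
    simp only [ContinuousLinearMap.sub_apply, ContinuousLinearMap.id_apply,
      ContinuousLinearMap.sum_apply, ContinuousLinearMap.smulRight_apply,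
      ContinuousLinearMap.smul_apply, innerSL_apply_apply, smul_eq_mul, Finset.smul_sum, smul_smul]
    congr 1
    refine Finset.sum_congr rfl fun j _ => ?_
    ring_nf

end
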